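/- Let R be a finite reduced crystallographic root system spanning a finite-dimensional real vector space V, with base Π and Weyl group W, and let γ ∈ V satisfy ⟨γ, α∨⟩ ∈ ℤ_{>0} for every α ∈ Π. For w ∈ W, write γ − wγ = Σ_{α ∈ Π} c_α(w)·α with coefficients c_α(w) ∈ ℤ_{≥0}. Then for every w ∈ W and every α ∈ Π, either c_α(w) = 0 or c_α(w) ≥ ⟨γ, α∨⟩. -/

import Mathlib

open Set Function RootPairing
set_option linter.unusedSectionVars false
section
variable {ι V N : Type*} [Fintype ι] [DecidableEq ι] [AddCommGroup V] [Module ℝ V]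
  [AddCommGroup N] [Module ℝ N] (P : RootPairing ι ℝ V N)

def wW : List ι → (V ≃ₗ[ℝ] V)
  | [] => LinearEquiv.refl ℝ V
  | l :: L => (wW L).trans (P.reflection l)

def wP : List ι → ι → ι
  | [] => fun k => k
  | l :: L => fun k => wP L (P.reflectionPerm l k)

@[simp] lemma wW_nil (x : V) : wW P [] x = x := rfl
@[simp] lemma wW_cons (l : ι) (L : List ι) (x : V) :
    wW P (l :: L) x = P.reflection l (wW P L x) := rfl
@[simp] lemma wP_nil (k : ι) : wP P [] k = k := rfl
@[simp] lemma wP_cons (l : ι) (L : List ι) (k : ι) :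
    wP P (l :: L) k = wP P L (P.reflectionPerm l k) := rfl

lemma coroot'_wW (L : List ι) (k : ι) (x : V) :
    P.coroot' k (wW P L x) = P.coroot' (wP P L k) x := by
  induction L generalizing k with
  | nil => rfl
  | cons l L ih => rw [wW_cons, coroot'_reflection, wP_cons, ih]

lemma root_wP (L : List ι) (k : ι) :
    P.root (wP P L k) = (wW P L).symm (P.root k) := by
  induction L generalizing k with
  | nil => rfl
  | cons l L ih =>
    rw [wP_cons, ih, root_reflectionPerm]
    show _ = (((wW P L).trans (P.reflection l)).symm) (P.root k)
    rw [LinearEquiv.symm_trans_apply]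
    congr 1

lemma reflection_conj (l k : ι) (x : V) :
    P.reflection (P.reflectionPerm l k) x
      = P.reflection l (P.reflection k (P.reflection l x)) := by
  rw [reflection_apply (i := P.reflectionPerm l k), coroot'_reflectionPerm,
    root_reflectionPerm]
  simp only [LinearMap.coe_comp, comp_apply]
  conv_rhs => rw [reflection_apply (i := k)]
  rw [map_sub, map_smul, reflection_same]
  rfl
variable {ι V N : Type*} [Fintype ι] [DecidableEq ι] [AddCommGroup V] [Module ℝ V]
  [AddCommGroup N] [Module ℝ N] (P : RootPairing ι ℝ V N)
  (b : Finset ι) (B : Module.Basis b ℝ V)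

lemma repr_root_base (hB : ∀ j : b, B j = P.root ↑j) (j : b) :
    B.repr (P.root ↑j) = Finsupp.single j 1 := by
  rw [← hB, B.repr_self]

lemma exists_int_repr (hB : ∀ j : b, B j = P.root ↑j)
    (hb2 : ∀ i, ∃ c : ι → ℤ, ((∀ j ∈ b, 0 ≤ c j) ∨ (∀ j ∈ b, c j ≤ 0)) ∧
      P.root i = ∑ j ∈ b, c j • P.root j) (k : ι) :
    ∃ z : b → ℤ, (∀ j, B.repr (P.root k) j = (z j : ℝ)) ∧
      ((∀ j, 0 ≤ z j) ∨ (∀ j, z j ≤ 0)) := by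
  obtain ⟨c, hsign, hsum⟩ := hb2 k
  refine ⟨fun j => c ↑j, fun j => ?_, ?_⟩
  · have hsum' : P.root k = ∑ j : b, ((c ↑j : ℝ)) • B j := by
      rw [hsum, ← Finset.sum_coe_sort b (fun j => c j • P.root j)]
      refine Finset.sum_congr rfl fun j _ => ?_
      rw [hB, Int.cast_smul_eq_zsmul]
    rw [hsum', map_sum]
    simp only [map_smul, B.repr_self]
    rw [Finsupp.finset_sum_apply]
    simp [Finsupp.single_apply]
  · rcases hsign with h | h
    · exact Or.inl fun j => h ↑j j.2
    · exact Or.inr fun j => h ↑j j.2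

lemma pos_or_neg (hB : ∀ j : b, B j = P.root ↑j)
    (hb2 : ∀ i, ∃ c : ι → ℤ, ((∀ j ∈ b, 0 ≤ c j) ∨ (∀ j ∈ b, c j ≤ 0)) ∧
      P.root i = ∑ j ∈ b, c j • P.root j) (k : ι) :
    (∀ j, 0 ≤ B.repr (P.root k) j) ∨ (∀ j, B.repr (P.root k) j ≤ 0) := by
  obtain ⟨z, hz, hsign⟩ := exists_int_repr P b B hB hb2 k
  rcases hsign with h | h
  · exact Or.inl fun j => by rw [hz]; exact_mod_cast h j
  · exact Or.inr fun j => by rw [hz]; exact_mod_cast h j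

-- local notation for hypotheses bundles
variable (hB : ∀ j : b, B j = P.root ↑j)

lemma repr_reflect (hB : ∀ j : b, B j = P.root ↑j) (l : b) (k : ι) (j : b) (hjl : j ≠ l) :
    B.repr (P.root (P.reflectionPerm ↑l k)) j = B.repr (P.root k) j := by
  rw [root_reflectionPerm, reflection_apply_root, map_sub, map_smul,
    (by rw [← hB, B.repr_self] : B.repr (P.root ↑l) = Finsupp.single l 1)]
  simp [Finsupp.single_apply, hjl.symm]

lemma repr_reflect_self (hB : ∀ j : b, B j = P.root ↑j) (l : b) (k : ι) :
    B.repr (P.root (P.reflectionPerm ↑l k)) l = B.repr (P.root k) l - P.pairing k ↑l := by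
  rw [root_reflectionPerm, reflection_apply_root, map_sub, map_smul,
    (by rw [← hB, B.repr_self] : B.repr (P.root ↑l) = Finsupp.single l 1)]
  simp

lemma posA (hred : P.IsReduced) (hB : ∀ j : b, B j = P.root ↑j)
    (hb2 : ∀ i, ∃ c : ι → ℤ, ((∀ j ∈ b, 0 ≤ c j) ∨ (∀ j ∈ b, c j ≤ 0)) ∧
      P.root i = ∑ j ∈ b, c j • P.root j)
    (l : b) (k : ι) (hk : ∀ j, 0 ≤ B.repr (P.root k) j)
    (hne : P.root k ≠ P.root ↑l) :
    ∀ j, 0 ≤ B.repr (P.root (P.reflectionPerm ↑l k)) j := by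
  have hex : ∃ j₀ : b, j₀ ≠ l ∧ 0 < B.repr (P.root k) j₀ := by
    by_contra hcon
    push_neg at hcon
    have hz : ∀ j : b, j ≠ l → B.repr (P.root k) j = 0 :=
      fun j hj => le_antisymm (hcon j hj) (hk j)
    have hkl : P.root k = B.repr (P.root k) l • P.root ↑l := by
      conv_lhs => rw [← B.sum_repr (P.root k)]
      rw [Fintype.sum_eq_single l (fun j hj => by rw [hz j hj, zero_smul]), hB]
    have hdep : ¬ LinearIndependent ℝ ![P.root k, P.root ↑l] := by
      intro hli
      rw [linearIndependent_fin2] at hli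
      exact hli.2 (B.repr (P.root k) l) hkl.symm
    rcases hred.1 k ↑l hdep with h | h
    · exact hne h
    · have : B.repr (P.root k) l = -1 := by
        rw [h, map_neg, (by rw [← hB, B.repr_self] : B.repr (P.root ↑l) = Finsupp.single l 1)]
        simp
      linarith [hk l]
  obtain ⟨j₀, hj₀l, hj₀⟩ := hex
  rcases pos_or_neg P b B hB hb2 (P.reflectionPerm ↑l k) with h | h
  · exact h
  · exfalso
    have := h j₀
    rw [repr_reflect P b B hB l k j₀ hj₀l] at this
    linarith

lemma obtuse (hred : P.IsReduced) (hB : ∀ j : b, B j = P.root ↑j)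
    (hb2 : ∀ i, ∃ c : ι → ℤ, ((∀ j ∈ b, 0 ≤ c j) ∨ (∀ j ∈ b, c j ≤ 0)) ∧
      P.root i = ∑ j ∈ b, c j • P.root j)
    (i j : b) (hij : i ≠ j) : P.pairing ↑i ↑j ≤ 0 := by
  by_contra h
  push_neg at h
  have hsingle : ∀ (m : b), B.repr (P.root ↑m) = Finsupp.single m 1 :=
    fun m => by rw [← hB, B.repr_self]
  rcases pos_or_neg P b B hB hb2 (P.reflectionPerm ↑j ↑i) with h' | h'
  · have := h' j
    rw [repr_reflect_self P b B hB j ↑i, hsingle i] at this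
    rw [Finsupp.single_apply, if_neg hij] at this
    linarith
  · have := h' i
    rw [repr_reflect P b B hB j ↑i i hij, hsingle i] at this
    rw [Finsupp.single_apply, if_pos rfl] at this; linarith

lemma corootPos_aux (hred : P.IsReduced) (hcrys : P.IsCrystallographic)
    (hB : ∀ j : b, B j = P.root ↑j)
    (hb2 : ∀ i, ∃ c : ι → ℤ, ((∀ j ∈ b, 0 ≤ c j) ∨ (∀ j ∈ b, c j ≤ 0)) ∧
      P.root i = ∑ j ∈ b, c j • P.root j)
    (γ : V) (hγ : ∀ j : b, 0 < P.toLinearMap γ (P.coroot ↑j)) :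
    ∀ n : ℕ, ∀ k : ι, (∀ j, 0 ≤ B.repr (P.root k) j) →
      (∑ j, B.repr (P.root k) j) ≤ n → 0 ≤ P.toLinearMap γ (P.coroot k) := by
  intro n
  induction n with
  | zero =>
    intro k hk hsum
    exfalso
    have hz : ∀ j : b, B.repr (P.root k) j = 0 := by
      have h0 : (∑ j, B.repr (P.root k) j) = 0 :=
        le_antisymm (by exact_mod_cast hsum) (Finset.sum_nonneg fun j _ => hk j)
      intro j
      exact (Finset.sum_eq_zero_iff_of_nonneg (fun j _ => hk j)).mp h0 j (Finset.mem_univ j)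
    have : P.root k = 0 := by
      conv_lhs => rw [← B.sum_repr (P.root k)]
      exact Finset.sum_eq_zero fun j _ => by rw [hz j, zero_smul]
    exact P.ne_zero k this
  | succ n ih =>
    intro k hk hsum
    by_cases hkb : k ∈ b
    · exact le_of_lt (hγ ⟨k, hkb⟩)
    · have hselfpos : ∀ m : ι, 0 < P.RootForm (P.root m) (P.root m) := fun m => by
        rw [rootForm_root_self]
        exact Finset.sum_pos' (fun i _ => mul_self_nonneg _)
          ⟨m, Finset.mem_univ _, by rw [pairing_same]; norm_num⟩
      have hform : 0 < P.RootForm (P.root k) (P.root k) := hselfpos k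
      have hexp : P.root k = ∑ j : b, B.repr (P.root k) j • P.root ↑j := by
        conv_lhs => rw [← B.sum_repr (P.root k)]
        exact Finset.sum_congr rfl fun j _ => by rw [hB]
      have hex : ∃ j : b, 0 < P.RootForm (P.root k) (P.root ↑j) := by
        by_contra hcon
        push_neg at hcon
        have h2 := congrArg (fun v => P.RootForm (P.root k) v) hexp
        simp only [map_sum, map_smul, smul_eq_mul] at h2
        rw [h2] at hform
        have : (∑ j : b, B.repr (P.root k) j * P.RootForm (P.root k) (P.root ↑j)) ≤ 0 :=
          Finset.sum_nonpos fun j _ => mul_nonpos_iff.mpr (Or.inl ⟨hk j, hcon j⟩)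
        linarith
      obtain ⟨j, hjf⟩ := hex
      have hpkj : 0 < P.pairing k ↑j := by
        have h2 : 2 * P.RootForm (P.root k) (P.root ↑j)
            = P.pairing k ↑j * P.RootForm (P.root ↑j) (P.root ↑j) :=
          (P.posRootForm ℝ).two_mul_apply_root_root k ↑j
        have h3 := hselfpos ↑j
        by_contra hc
        push_neg at hc
        nlinarith
      have hqjk : 0 < P.pairing ↑j k := by
        have h2 : 2 * P.RootForm (P.root ↑j) (P.root k)
            = P.pairing ↑j k * P.RootForm (P.root k) (P.root k) :=
          (P.posRootForm ℝ).two_mul_apply_root_root ↑j k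
        have hsym : P.RootForm (P.root ↑j) (P.root k) = P.RootForm (P.root k) (P.root ↑j) := by
          simp only [rootForm_apply_apply, mul_comm]
        by_contra hc
        push_neg at hc
        nlinarith
      have hne : P.root k ≠ P.root ↑j := fun h => hkb (by
        have : k = ↑j := P.root.injective h
        rw [this]; exact j.2)
      have hk' : ∀ j', 0 ≤ B.repr (P.root (P.reflectionPerm ↑j k)) j' :=
        posA P b B hred hB hb2 j k hk hne
      have hp1 : (1 : ℝ) ≤ P.pairing k ↑j := by
        obtain ⟨z, hz'⟩ := hcrys.1 k ↑j
        have hz : (z : ℝ) = P.pairing k ↑j := by rw [← hz']; exact (eq_intCast _ z).symm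
        have hz1 : (1 : ℤ) ≤ z := by
          by_contra hcontra
          push_neg at hcontra
          have : (z : ℝ) ≤ 0 := by exact_mod_cast Int.lt_add_one_iff.mp hcontra
          rw [hz] at this; linarith
        calc (1:ℝ) = ((1:ℤ):ℝ) := by norm_num
        _ ≤ (z : ℝ) := by exact_mod_cast hz1
        _ = P.pairing k ↑j := hz
      have hsum' : (∑ j', B.repr (P.root (P.reflectionPerm ↑j k)) j') ≤ n := by
        have hs : (∑ j', B.repr (P.root (P.reflectionPerm ↑j k)) j')
            = (∑ j', B.repr (P.root k) j') - P.pairing k ↑j := by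
          rw [← Finset.sum_erase_add _ _ (Finset.mem_univ j),
            ← Finset.sum_erase_add _ _ (Finset.mem_univ j)]
          rw [repr_reflect_self P b B hB j k]
          rw [Finset.sum_congr rfl (fun j' hj' =>
            repr_reflect P b B hB j k j' (Finset.ne_of_mem_erase hj'))]
          ring
        rw [hs]
        have : ((n:ℝ) + 1) = ((n+1 : ℕ) : ℝ) := by push_cast; ring
        linarith [hsum, hp1, this ▸ hsum]
      have hih := ih (P.reflectionPerm ↑j k) hk' hsum'
      have hco : P.coroot k = P.coroot (P.reflectionPerm ↑j k) + P.pairing ↑j k • P.coroot ↑j := by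
        have h1 : P.coroot k = P.coreflection ↑j (P.coroot (P.reflectionPerm ↑j k)) := by
          rw [← coroot_reflectionPerm, reflectionPerm_self]
        rw [h1, coreflection_apply_coroot]
        have h3 : P.pairing ↑j (P.reflectionPerm ↑j k) = - P.pairing ↑j k := by
          rw [pairing_reflectionPerm, pairing_reflectionPerm_self_left]
        rw [h3]
        module
      rw [hco, map_add, map_smul]
      have : 0 < P.toLinearMap γ (P.coroot ↑j) := hγ j
      have hmul : 0 ≤ P.pairing ↑j k * P.toLinearMap γ (P.coroot ↑j) :=
        le_of_lt (mul_pos hqjk this)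
      simpa [smul_eq_mul] using add_nonneg hih hmul

lemma deletion (hred : P.IsReduced) (hB : ∀ j : b, B j = P.root ↑j)
    (hb2 : ∀ i, ∃ c : ι → ℤ, ((∀ j ∈ b, 0 ≤ c j) ∨ (∀ j ∈ b, c j ≤ 0)) ∧
      P.root i = ∑ j ∈ b, c j • P.root j) :
    ∀ L : List ι, (∀ l ∈ L, l ∈ b) → ∀ k : ι,
      (∀ j, 0 ≤ B.repr (P.root k) j) →
      ¬ (∀ j, 0 ≤ B.repr (P.root (wP P L k)) j) →
      ∃ M : List ι, (∀ l ∈ M, l ∈ b) ∧ M.length + 1 ≤ L.length ∧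
        ∀ x, wW P M x = P.reflection k (wW P L x) := by
  intro L
  induction L with
  | nil => intro _ k hk hnk; exact absurd hk hnk
  | cons l L₀ ih =>
    intro hLb k hk hnk
    have hlb : l ∈ b := hLb l (List.mem_cons_self)
    by_cases hP : ∀ j, 0 ≤ B.repr (P.root (P.reflectionPerm l k)) j
    · obtain ⟨M₀, hM₀b, hM₀len, hM₀w⟩ :=
        ih (fun x hx => hLb x (List.mem_cons_of_mem l hx)) (P.reflectionPerm l k) hP
          (by rwa [wP_cons] at hnk)
      refine ⟨l :: M₀, ?_, by simpa using Nat.succ_le_succ hM₀len, fun x => ?_⟩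
      · intro x hx
        rcases List.mem_cons.mp hx with h | h
        · exact h ▸ hlb
        · exact hM₀b x h
      · rw [wW_cons, hM₀w x, wW_cons, reflection_conj P l k ((wW P L₀) x), reflection_same]
    · have hkl : P.root k = P.root l := by
        by_contra hne
        exact hP (posA P b B hred hB hb2 ⟨l, hlb⟩ k hk hne)
      have hkeq : k = l := P.root.injective hkl
      refine ⟨L₀, fun x hx => hLb x (List.mem_cons_of_mem l hx), by simp, fun x => ?_⟩
      rw [wW_cons, hkeq, reflection_same]

lemma mainClaim (hred : P.IsReduced) (hcrys : P.IsCrystallographic)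
    (hB : ∀ j : b, B j = P.root ↑j)
    (hb2 : ∀ i, ∃ c : ι → ℤ, ((∀ j ∈ b, 0 ≤ c j) ∨ (∀ j ∈ b, c j ≤ 0)) ∧
      P.root i = ∑ j ∈ b, c j • P.root j)
    (γ : V) (hγ : ∀ j : b, 0 < P.toLinearMap γ (P.coroot ↑j)) :
    ∀ n : ℕ, ∀ L : List ι, L.length ≤ n → (∀ l ∈ L, l ∈ b) →
      ∃ d : b → ℝ, γ - wW P L γ = ∑ j : b, d j • P.root ↑j ∧
        ∀ j : b, 0 ≤ d j ∧ (d j = 0 ∨ P.toLinearMap γ (P.coroot ↑j) ≤ d j) := by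
  have corootPos : ∀ k : ι, (∀ j, 0 ≤ B.repr (P.root k) j) →
      0 ≤ P.toLinearMap γ (P.coroot k) := fun k hk =>
    corootPos_aux P b B hred hcrys hB hb2 γ hγ ⌈∑ j, B.repr (P.root k) j⌉₊ k hk (Nat.le_ceil _)
  intro n
  induction n with
  | zero =>
    intro L hlen _
    have : L = [] := List.eq_nil_of_length_eq_zero (Nat.le_zero.mp hlen)
    subst this
    exact ⟨0, by simp, fun j => ⟨le_refl 0, Or.inl rfl⟩⟩
  | succ n ih =>
    intro L hlen hLb
    match L with
    | [] => exact ⟨0, by simp, fun j => ⟨le_refl 0, Or.inl rfl⟩⟩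
    | i :: L' =>
      have hib : i ∈ b := hLb i (List.mem_cons_self)
      set iB : b := ⟨i, hib⟩
      have hL'b : ∀ l ∈ L', l ∈ b := fun x hx => hLb x (List.mem_cons_of_mem i hx)
      have hL'len : L'.length ≤ n := Nat.succ_le_succ_iff.mp hlen
      by_cases hpos : ∀ j, 0 ≤ B.repr (P.root (wP P L' i)) j
      · obtain ⟨d', hd'sum, hd'⟩ := ih L' hL'len hL'b
        set t := P.coroot' i (wW P L' γ) with ht
        have ht0 : t = P.toLinearMap γ (P.coroot (wP P L' i)) := by
          rw [ht, coroot'_wW]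
          rfl
        have htnn : 0 ≤ t := ht0 ▸ corootPos (wP P L' i) hpos
        have heq : γ - wW P (i :: L') γ = (γ - wW P L' γ) + t • P.root i := by
          rw [wW_cons, RootPairing.reflection_apply]
          abel
        have hsum2 : (∑ j : b, (if j = iB then t else 0) • P.root ↑j) = t • P.root i := by
          rw [Fintype.sum_eq_single iB (fun j hj => by rw [if_neg hj, zero_smul])]
          rw [if_pos rfl]
        refine ⟨fun j => d' j + (if j = iB then t else 0), ?_, fun j => ?_⟩
        · rw [heq, hd'sum]
          rw [← hsum2]
          rw [← Finset.sum_add_distrib]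
          exact Finset.sum_congr rfl fun j _ => by rw [add_smul]
        · dsimp only
          by_cases hj : j = iB
          · subst hj
            rw [if_pos rfl]
            constructor
            · exact add_nonneg (hd' iB).1 htnn
            · right
              rcases (hd' iB).2 with h0 | hge
              · -- d' j = 0 : show g ≤ t
                rw [h0, zero_add]
                have hexp : P.toLinearMap (γ - wW P L' γ) (P.coroot i)
                    = ∑ j' : b, d' j' * P.pairing ↑j' i := by
                  rw [hd'sum, map_sum]
                  simp only [LinearMap.coe_sum, Finset.sum_apply]
                  refine Finset.sum_congr rfl fun j' _ => ?_
                  rw [map_smul, LinearMap.smul_apply, smul_eq_mul,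
                    root_coroot_eq_pairing]
                have ht2 : t = P.toLinearMap γ (P.coroot i)
                    - ∑ j' : b, d' j' * P.pairing ↑j' i := by
                  rw [← hexp, map_sub, LinearMap.sub_apply, ht]
                  have h5 : P.coroot' i (wW P L' γ)
                      = P.toLinearMap (wW P L' γ) (P.coroot i) := rfl
                  rw [h5]
                  ring
                have hterm : ∀ j' : b, d' j' * P.pairing ↑j' i ≤ 0 := by
                  intro j'
                  by_cases hj' : j' = iB
                  · subst hj'; rw [h0, zero_mul]
                  · exact mul_nonpos_iff.mpr (Or.inl ⟨(hd' j').1,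
                      obtuse P b B hred hB hb2 j' iB hj'⟩)
                have : (∑ j' : b, d' j' * P.pairing ↑j' i) ≤ 0 :=
                  Finset.sum_nonpos fun j' _ => hterm j'
                rw [ht2]
                linarith
              · rcases hge with hge
                calc P.toLinearMap γ (P.coroot ↑iB) ≤ d' iB := hge
                _ ≤ d' iB + t := le_add_of_nonneg_right htnn
          · rw [if_neg hj, add_zero]
            exact hd' j
      · have hiPos : ∀ j, 0 ≤ B.repr (P.root i) j := by
          intro j
          rw [show P.root i = P.root ↑iB from rfl, repr_root_base P b B hB iB]
          rw [Finsupp.single_apply]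
          split <;> norm_num
        obtain ⟨M, hMb, hMlen, hMw⟩ := deletion P b B hred hB hb2 L' hL'b i hiPos hpos
        have hMlen' : M.length ≤ n := le_trans (Nat.le_of_succ_le hMlen) hL'len
        obtain ⟨d, hdsum, hd⟩ := ih M hMlen' hMb
        exact ⟨d, by rw [← hdsum, hMw γ, wW_cons], hd⟩

end



/-- A root system: a root pairing whose roots span the ambient module (the older Mathlib
definition of `RootSystem`, which is no longer in Mathlib). -/
structure RootSystem (ι R M N : Type*) [CommRing R] [AddCommGroup M] [Module R M]
    [AddCommGroup N] [Module R N] extends RootPairing ι R M N where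
  span_eq_top : Submodule.span R (Set.range toRootPairing.root) = ⊤

/-- A base of a root system: a linearly independent subset of the roots such that every root
is either a nonnegative or a nonpositive integer linear combination of its elements. -/
def RootSystem.IsBaseSet {ι V N : Type*} [AddCommGroup V] [Module ℝ V]
    [AddCommGroup N] [Module ℝ N] (P : RootSystem ι ℝ V N) (b : Finset ι) : Prop :=
  (LinearIndependent ℝ fun j : b => P.root j) ∧
    ∀ i : ι, ∃ c : ι → ℤ, ((∀ j ∈ b, 0 ≤ c j) ∨ (∀ j ∈ b, c j ≤ 0)) ∧
      P.root i = ∑ j ∈ b, c j • P.root j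

/-- **Nonzero coefficients of `γ − wγ` are at least `⟨γ, α∨⟩`.**
For `γ` with `⟨γ, α∨⟩ ∈ ℤ_{>0}` for all simple `α`, and `w` in the Weyl group (the group
generated by the simple reflections), writing `γ − wγ = Σ_{α ∈ Π} c_α(w)·α`, each
coefficient `c_α(w)` is either `0` or at least `⟨γ, α∨⟩`. -/
theorem coeff_eq_zero_or_ge_pairing
    {ι V N : Type*} [Fintype ι] [DecidableEq ι] [AddCommGroup V] [Module ℝ V]
    [FiniteDimensional ℝ V] [AddCommGroup N] [Module ℝ N]
    (P : RootSystem ι ℝ V N) (hcrys : P.IsCrystallographic) (hred : P.IsReduced)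
    (b : Finset ι) (hb : P.IsBaseSet b)
    (γ : V) (hγ : ∀ j ∈ b, ∃ z : ℤ, 0 < z ∧ (z : ℝ) = P.toLinearMap γ (P.coroot j))
    (w : V ≃ₗ[ℝ] V)
    (hw : w ∈ Subgroup.closure {x : V ≃ₗ[ℝ] V | ∃ i ∈ b, x = P.reflection i})
    (c : ι → ℕ) (hc : γ - w γ = ∑ j ∈ b, (c j : ℝ) • P.root j) :
    ∀ j ∈ b, c j = 0 ∨ P.toLinearMap γ (P.coroot j) ≤ (c j : ℝ) := by
  classical
  obtain ⟨hli, hb2⟩ := hb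
  have hspan : ⊤ ≤ Submodule.span ℝ (Set.range fun j : b => P.root ↑j) := by
    rw [← P.span_eq_top]
    rw [Submodule.span_le]
    rintro _ ⟨i, rfl⟩
    obtain ⟨cc, -, hsum⟩ := hb2 i
    rw [hsum]
    refine Submodule.sum_mem _ fun j hj => ?_
    have hmem := Submodule.smul_mem
      (Submodule.span ℝ (Set.range fun j : b => P.root ↑j)) ((cc j : ℝ))
      (Submodule.subset_span ⟨⟨j, hj⟩, rfl⟩)
    rwa [Int.cast_smul_eq_zsmul] at hmem
  let B : Module.Basis b ℝ V := Module.Basis.mk hli hspan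
  have hB : ∀ j : b, B j = P.root ↑j := fun j => Module.Basis.mk_apply hli hspan j
  have hγ' : ∀ j : b, 0 < P.toLinearMap γ (P.coroot ↑j) := by
    intro j
    obtain ⟨z, hz0, hzeq⟩ := hγ ↑j j.2
    rw [← hzeq]
    exact_mod_cast hz0
  have hw' : w ∈ Submonoid.closure {x : V ≃ₗ[ℝ] V | ∃ i ∈ b, x = P.reflection i} := by
    refine Subgroup.closure_induction (fun x hx => Submonoid.subset_closure hx)
      (Submonoid.one_mem _) (fun x y _ _ hx hy => Submonoid.mul_mem _ hx hy) ?_ hw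
    intro x _ hx
    refine Submonoid.closure_induction (motive := fun y _ => y⁻¹ ∈ Submonoid.closure
      {x : V ≃ₗ[ℝ] V | ∃ i ∈ b, x = P.reflection i}) (fun y hy => ?_) ?_ ?_ hx
    · obtain ⟨i, hib, rfl⟩ := hy
      rw [RootPairing.reflection_inv]
      exact Submonoid.subset_closure ⟨i, hib, rfl⟩
    · show (1 : V ≃ₗ[ℝ] V)⁻¹ ∈ _
      rw [inv_one]
      exact Submonoid.one_mem _
    · intro y z _ _ hyy hzz
      show (y * z)⁻¹ ∈ _
      rw [mul_inv_rev]
      exact Submonoid.mul_mem _ hzz hyy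
  obtain ⟨l, hl, hlprod⟩ := Submonoid.exists_list_of_mem_closure hw'
  have hLex : ∀ ls : List (V ≃ₗ[ℝ] V), (∀ x ∈ ls, ∃ i ∈ b, x = P.reflection i) →
      ∃ L : List ι, (∀ i ∈ L, i ∈ b) ∧ ∀ x : V, ls.prod x = wW P.toRootPairing L x := by
    intro ls
    induction ls with
    | nil => exact fun _ => ⟨[], by simp, fun x => rfl⟩
    | cons a ls ihl =>
      intro h
      obtain ⟨i, hib, hai⟩ := h a (List.mem_cons_self)
      obtain ⟨L, hLb, hLw⟩ := ihl fun x hx => h x (List.mem_cons_of_mem a hx)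
      refine ⟨i :: L, ?_, fun x => ?_⟩
      · intro y hy
        rcases List.mem_cons.mp hy with h' | h'
        exacts [h' ▸ hib, hLb y h']
      · rw [List.prod_cons, wW_cons, ← hLw x, hai]
        rfl
  obtain ⟨L, hLb, hLw⟩ := hLex l hl
  have hwL : w γ = wW P.toRootPairing L γ := by rw [← hlprod]; exact hLw γ
  obtain ⟨d, hdsum, hd⟩ :=
    mainClaim P.toRootPairing b B hred hcrys hB hb2 γ hγ' L.length L le_rfl hLb
  rw [← hwL] at hdsum
  have hceq : ∀ j : b, (c ↑j : ℝ) = d j := by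
    have hsum1 : ∑ j : b, (c ↑j : ℝ) • P.root ↑j = ∑ j : b, d j • P.root ↑j := by
      rw [Finset.sum_coe_sort b (fun j => (c j : ℝ) • P.root j), ← hc, hdsum]
    have h0 : ∑ j : b, ((c ↑j : ℝ) - d j) • P.root ↑j = 0 := by
      simp only [sub_smul]
      rw [Finset.sum_sub_distrib, hsum1, sub_self]
    intro j
    exact sub_eq_zero.mp (Fintype.linearIndependent_iff.mp hli (fun j => (c ↑j : ℝ) - d j) h0 j)
  intro j hj
  rcases (hd ⟨j, hj⟩).2 with h0 | hge
  · left
    have : (c j : ℝ) = 0 := by rw [hceq ⟨j, hj⟩, h0]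
    exact_mod_cast this
  · right
    rw [hceq ⟨j, hj⟩]
    exact hge
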